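/- Orthogonalization preserving the distinguishability ratio: for any two distinct density operators ρ, σ on H, there exist orthogonal density operators ρ̂, σ̂ (tr(ρ̂σ̂)=0) with rank(ρ̂) ≤ min{rank(ρ), (dim H)/2} and (1/2)‖ρ̂ − σ̂‖_M = ‖ρ − σ‖_M / ‖ρ − σ‖₁. -/

import Mathlib

open Matrix
open scoped ComplexOrder

namespace QSVQDH

variable {d : ℕ}

/-- Schatten 1-norm (trace norm). -/
noncomputable def trNorm (A : Matrix (Fin d) (Fin d) ℂ) : ℝ :=
  ((Matrix.posSemidef_conjTranspose_mul_self A).1.eigenvectorUnitary.1 *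
    diagonal (((↑) : ℝ → ℂ) ∘ (fun x : ℝ => √x) ∘ (Matrix.posSemidef_conjTranspose_mul_self A).1.eigenvalues) *
    (star (Matrix.posSemidef_conjTranspose_mul_self A).1.eigenvectorUnitary :
      Matrix (Fin d) (Fin d) ℂ)).trace.re

/-- Schatten 2-norm (Hilbert–Schmidt norm). -/
noncomputable def hsNorm (A : Matrix (Fin d) (Fin d) ℂ) : ℝ :=
  Real.sqrt ((Aᴴ * A).trace.re)

/-- Operator norm. -/
noncomputable def opNorm (A : Matrix (Fin d) (Fin d) ℂ) : ℝ :=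
  ‖Matrix.toEuclideanCLM (𝕜 := ℂ) A‖

/-- Density operator: positive semidefinite with unit trace. -/
def IsDensity (ρ : Matrix (Fin d) (Fin d) ℂ) : Prop := ρ.PosSemidef ∧ ρ.trace = 1

/-- POVM element: 0 ≤ M ≤ I. -/
def IsPOVMElem (M : Matrix (Fin d) (Fin d) ℂ) : Prop := M.PosSemidef ∧ (1 - M).PosSemidef

/-- A measurement class of binary effects: contains 0, consists of POVM elements,
is convex, and is closed under M ↦ I − M. -/
def IsMClass (Mset : Set (Matrix (Fin d) (Fin d) ℂ)) : Prop :=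
  0 ∈ Mset ∧ (∀ M ∈ Mset, IsPOVMElem M) ∧ Convex ℝ Mset ∧ (∀ M ∈ Mset, 1 - M ∈ Mset)

/-- The M-seminorm ‖Δ‖_M = sup_{M ∈ Mset} (2 tr(MΔ) − tr Δ). -/
noncomputable def Mnorm (Mset : Set (Matrix (Fin d) (Fin d) ℂ))
    (Δ : Matrix (Fin d) (Fin d) ℂ) : ℝ :=
  sSup ((fun M => 2 * (M * Δ).trace.re - Δ.trace.re) '' Mset)

/-- The ε-distinguishability ratio μ_{ρ,M}(ε). -/
noncomputable def mu (Mset : Set (Matrix (Fin d) (Fin d) ℂ))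
    (ρ : Matrix (Fin d) (Fin d) ℂ) (ε : ℝ) : ℝ :=
  (1 / (2 * ε)) *
    sInf ((fun σ => Mnorm Mset (ρ - σ)) '' {σ | IsDensity σ ∧ 2 * ε ≤ trNorm (ρ - σ)})

/-- The ε-visibility γ_{V,M}(ε), where the subspace V is given by its
orthogonal projector P. -/
noncomputable def gamma (Mset : Set (Matrix (Fin d) (Fin d) ℂ))
    (P : Matrix (Fin d) (Fin d) ℂ) (ε : ℝ) : ℝ :=
  (1 / ε) * sSup ((fun Ω =>
      sInf ((fun p : Matrix (Fin d) (Fin d) ℂ × Matrix (Fin d) (Fin d) ℂ =>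
          (Ω * (p.1 - p.2)).trace.re) ''
        {p | IsDensity p.1 ∧ P * p.1 = p.1 ∧ IsDensity p.2 ∧ (p.2 * P).trace.re ≤ 1 - ε}))
    '' Mset)

/-- The ε-visibility in its minimax (minimum) form. -/
noncomputable def gammaMin (Mset : Set (Matrix (Fin d) (Fin d) ℂ))
    (P : Matrix (Fin d) (Fin d) ℂ) (ε : ℝ) : ℝ :=
  sInf ((fun p : Matrix (Fin d) (Fin d) ℂ × Matrix (Fin d) (Fin d) ℂ =>
      (1 / (2 * ε)) * Mnorm Mset (p.1 - p.2)) ''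
    {p | IsDensity p.1 ∧ P * p.1 = p.1 ∧ IsDensity p.2 ∧ (p.2 * P).trace.re ≤ 1 - ε})

/-- μ_{ρ,M}(1), defined through perfectly distinguishable (orthogonal) counterparts. -/
noncomputable def muone (Mset : Set (Matrix (Fin d) (Fin d) ℂ))
    (ρ : Matrix (Fin d) (Fin d) ℂ) : ℝ :=
  (1 / 2) * sInf ((fun σ => Mnorm Mset (ρ - σ)) '' {σ | IsDensity σ ∧ (ρ * σ).trace = 0})

/-- The distinguishability ratio μ̂_{ρ,M}. -/
noncomputable def muhat (Mset : Set (Matrix (Fin d) (Fin d) ℂ))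
    (ρ : Matrix (Fin d) (Fin d) ℂ) : ℝ :=
  sInf ((fun σ => Mnorm Mset (ρ - σ) / trNorm (ρ - σ)) '' {σ | IsDensity σ ∧ σ ≠ ρ})


/-! ### Auxiliary lemmas -/

section Aux

section SqrtShim

open scoped MatrixOrder

/-- Positive semidefinite square root (port shim for the removed `Matrix.PosSemidef.sqrt`). -/
noncomputable def _root_.Matrix.PosSemidef.sqrt {B : Matrix (Fin d) (Fin d) ℂ}
    (_ : B.PosSemidef) : Matrix (Fin d) (Fin d) ℂ :=
  CFC.sqrt B

lemma _root_.Matrix.PosSemidef.sqrt_mul_self {B : Matrix (Fin d) (Fin d) ℂ}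
    (hB : B.PosSemidef) : hB.sqrt * hB.sqrt = B :=
  CFC.sqrt_mul_sqrt_self B hB.nonneg

lemma _root_.Matrix.PosSemidef.posSemidef_sqrt {B : Matrix (Fin d) (Fin d) ℂ}
    (hB : B.PosSemidef) : hB.sqrt.PosSemidef :=
  (CFC.sqrt_nonneg B).posSemidef

lemma _root_.Matrix.PosSemidef.eq_sqrt_of_sq_eq {A B : Matrix (Fin d) (Fin d) ℂ}
    (hA : A.PosSemidef) (hB : B.PosSemidef) (h : A ^ 2 = B) : A = hB.sqrt :=
  ((CFC.sqrt_eq_iff B A hB.nonneg hA.nonneg).mpr (by rw [← h, pow_two])).symm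

end SqrtShim

lemma max_mul_max_neg (x : ℝ) : max x 0 * max (-x) 0 = 0 := by
  rcases le_total x 0 with h | h
  · rw [max_eq_right h, zero_mul]
  · rw [max_eq_right (neg_nonpos.mpr h), mul_zero]

lemma max_sub_max_neg (x : ℝ) : max x 0 - max (-x) 0 = x :=
  max_zero_sub_max_neg_zero_eq_self x

lemma abs_eq_max_add (x : ℝ) : |x| = max x 0 + max (-x) 0 := by
  rcases le_total x 0 with h | h
  · rw [abs_of_nonpos h, max_eq_right h, max_eq_left (neg_nonneg.mpr h)]; ring
  · rw [abs_of_nonneg h, max_eq_left h, max_eq_right (neg_nonpos.mpr h)]; ring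

lemma trace_re_nonneg {A : Matrix (Fin d) (Fin d) ℂ} (hA : A.PosSemidef) :
    0 ≤ A.trace.re := by
  have h : ∀ i, 0 ≤ A i i := fun i => hA.diag_nonneg
  rw [Matrix.trace, Complex.re_sum]
  exact Finset.sum_nonneg fun i _ => (Complex.nonneg_iff.mp (h i)).1

lemma trace_mul_re_nonneg {A B : Matrix (Fin d) (Fin d) ℂ} (hA : A.PosSemidef)
    (hB : B.PosSemidef) : 0 ≤ (A * B).trace.re := by
  have h1 : A * B = A * hB.sqrt * hB.sqrt := by
    rw [mul_assoc, hB.sqrt_mul_self]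
  have h2 : (A * hB.sqrt * hB.sqrt).trace = (hB.sqrt * (A * hB.sqrt)).trace :=
    Matrix.trace_mul_comm _ _
  have h3 : (hB.sqrt * A * hB.sqrt).PosSemidef := by
    have := hA.mul_mul_conjTranspose_same hB.sqrt
    rwa [hB.posSemidef_sqrt.1.eq] at this
  rw [h1, h2, ← mul_assoc]
  exact trace_re_nonneg h3

open Matrix.IsHermitian in
/-- Conjugation of a diagonal function of the eigenvalues by the eigenvector unitary. -/
noncomputable def cd {A : Matrix (Fin d) (Fin d) ℂ} (hA : A.IsHermitian) (f : ℝ → ℝ) :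
    Matrix (Fin d) (Fin d) ℂ :=
  (eigenvectorUnitary hA : Matrix (Fin d) (Fin d) ℂ) *
    Matrix.diagonal (fun i => (f (hA.eigenvalues i) : ℂ)) *
    (star (eigenvectorUnitary hA : Matrix (Fin d) (Fin d) ℂ))

open Matrix.IsHermitian

variable {A : Matrix (Fin d) (Fin d) ℂ}

lemma cd_id (hA : A.IsHermitian) : cd hA id = A := by
  conv_rhs => rw [hA.spectral_theorem]
  rfl

lemma cd_mul (hA : A.IsHermitian) (f g : ℝ → ℝ) :
    cd hA f * cd hA g = cd hA (fun x => f x * g x) := by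
  unfold cd
  simp only [mul_assoc]
  rw [← mul_assoc (star (eigenvectorUnitary hA : Matrix (Fin d) (Fin d) ℂ))
    (eigenvectorUnitary hA : Matrix (Fin d) (Fin d) ℂ),
    Matrix.mem_unitaryGroup_iff'.mp (eigenvectorUnitary hA).2, one_mul,
    ← mul_assoc (Matrix.diagonal _) (Matrix.diagonal _), Matrix.diagonal_mul_diagonal]
  push_cast
  rfl

lemma cd_sub (hA : A.IsHermitian) (f g : ℝ → ℝ) :
    cd hA f - cd hA g = cd hA (fun x => f x - g x) := by
  unfold cd
  rw [← Matrix.sub_mul, ← Matrix.mul_sub, Matrix.diagonal_sub]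
  push_cast
  rfl

lemma cd_smul (hA : A.IsHermitian) (f : ℝ → ℝ) (c : ℝ) :
    cd hA (fun x => c * f x) = (c : ℂ) • cd hA f := by
  unfold cd
  have h : (fun i => ((c * f (hA.eigenvalues i) : ℝ) : ℂ))
      = (c : ℂ) • fun i => ((f (hA.eigenvalues i) : ℝ) : ℂ) := by
    funext i
    push_cast
    simp
  rw [h, Matrix.diagonal_smul, Matrix.mul_smul, Matrix.smul_mul]

lemma cd_posSemidef (hA : A.IsHermitian) {f : ℝ → ℝ} (hf : ∀ x, 0 ≤ f x) :
    (cd hA f).PosSemidef := by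
  have h := (Matrix.posSemidef_diagonal_iff.mpr
      (fun i => Complex.zero_le_real.mpr (hf (hA.eigenvalues i)))).mul_mul_conjTranspose_same
    (eigenvectorUnitary hA : Matrix (Fin d) (Fin d) ℂ)
  rwa [← Matrix.star_eq_conjTranspose] at h

lemma cd_trace (hA : A.IsHermitian) (f : ℝ → ℝ) :
    (cd hA f).trace = ((∑ i, f (hA.eigenvalues i) : ℝ) : ℂ) := by
  unfold cd
  rw [Matrix.trace_mul_comm, ← mul_assoc,
    Matrix.mem_unitaryGroup_iff'.mp (eigenvectorUnitary hA).2, one_mul, Matrix.trace_diagonal]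
  push_cast
  rfl

lemma cd_rank (hA : A.IsHermitian) (f : ℝ → ℝ) :
    (cd hA f).rank = Fintype.card {i // f (hA.eigenvalues i) ≠ 0} := by
  unfold cd
  have h1 : IsUnit (star (eigenvectorUnitary hA : Matrix (Fin d) (Fin d) ℂ)).det :=
    Matrix.isUnit_det_of_right_inverse (Matrix.mem_unitaryGroup_iff'.mp (eigenvectorUnitary hA).2)
  have h2 : IsUnit (eigenvectorUnitary hA : Matrix (Fin d) (Fin d) ℂ).det :=
    Matrix.isUnit_det_of_right_inverse (Matrix.mem_unitaryGroup_iff.mp (eigenvectorUnitary hA).2)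
  rw [Matrix.rank_mul_eq_left_of_isUnit_det _ _ h1, Matrix.rank_mul_eq_right_of_isUnit_det _ _ h2,
    Matrix.rank_diagonal]
  exact Fintype.card_congr (Equiv.subtypeEquivRight fun i => by simp)

lemma cd_of_forall_zero (hA : A.IsHermitian) {f : ℝ → ℝ}
    (hf : ∀ i, f (hA.eigenvalues i) = 0) : cd hA f = 0 := by
  unfold cd
  have h : (fun i => (f (hA.eigenvalues i) : ℂ)) = fun _ => 0 := by
    funext i; rw [hf]; norm_num
  rw [h, Matrix.diagonal_zero, Matrix.mul_zero, Matrix.zero_mul]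

lemma rank_le_of_jordan {P N σ ρ : Matrix (Fin d) (Fin d) ℂ}
    (hP : P.PosSemidef) (hσ : σ.PosSemidef) (hNP : N * P = 0)
    (hρ : ρ = σ + P - N) : P.rank ≤ ρ.rank := by
  have hdisj : Disjoint (LinearMap.range P.mulVecLin) (LinearMap.ker ρ.mulVecLin) := by
    rw [Submodule.disjoint_def]
    rintro v ⟨u, rfl⟩ hker
    rw [LinearMap.mem_ker] at hker
    set v := P.mulVecLin u with hv
    have hvdef : v = P *ᵥ u := rfl
    have hρv : ρ *ᵥ v = 0 := hker
    have hNv : N *ᵥ v = 0 := by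
      rw [hvdef, Matrix.mulVec_mulVec, hNP, Matrix.zero_mulVec]
    have hsplit : (0 : ℂ) = star v ⬝ᵥ σ *ᵥ v + star v ⬝ᵥ P *ᵥ v := by
      have h : ρ *ᵥ v = σ *ᵥ v + P *ᵥ v - N *ᵥ v := by
        rw [hρ, Matrix.sub_mulVec, Matrix.add_mulVec]
      rw [hρv, hNv, sub_zero] at h
      calc (0:ℂ) = star v ⬝ᵥ (0 : Fin d → ℂ) := by rw [dotProduct_zero]
        _ = star v ⬝ᵥ (σ *ᵥ v + P *ᵥ v) := by rw [← h]
        _ = _ := by rw [dotProduct_add]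
    have h1 : (0:ℂ) ≤ star v ⬝ᵥ σ *ᵥ v := hσ.dotProduct_mulVec_nonneg v
    have h2 : (0:ℂ) ≤ star v ⬝ᵥ P *ᵥ v := hP.dotProduct_mulVec_nonneg v
    have hPv0 : star v ⬝ᵥ P *ᵥ v = 0 := by
      have hle : star v ⬝ᵥ P *ᵥ v ≤ 0 := by
        have h : star v ⬝ᵥ P *ᵥ v = -(star v ⬝ᵥ σ *ᵥ v) := by linear_combination -hsplit
        rw [h]
        exact neg_nonpos.mpr h1
      exact le_antisymm hle h2
    have hPv : P *ᵥ v = 0 := (hP.dotProduct_mulVec_zero_iff v).mp hPv0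
    have h0 : star v ⬝ᵥ v = 0 := by
      calc star v ⬝ᵥ v = (star u ᵥ* Pᴴ) ⬝ᵥ v := by rw [hvdef, Matrix.star_mulVec]
        _ = star u ⬝ᵥ Pᴴ *ᵥ v := by rw [Matrix.dotProduct_mulVec]
        _ = star u ⬝ᵥ P *ᵥ v := by rw [hP.1.eq]
        _ = 0 := by rw [hPv, dotProduct_zero]
    exact dotProduct_star_self_eq_zero.mp h0
  have h1 := Submodule.finrank_add_finrank_le_of_disjoint hdisj
  have h2 := LinearMap.finrank_range_add_finrank_ker ρ.mulVecLin
  rw [Matrix.rank, Matrix.rank]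
  have h3 : Module.finrank ℂ (Fin d → ℂ) = d := by simp
  omega

lemma trNorm_eq_sum_abs (hA : A.IsHermitian) :
    trNorm A = ∑ i, |hA.eigenvalues i| := by
  have hB : (cd hA (fun x => |x|)).PosSemidef := cd_posSemidef hA (fun x => abs_nonneg x)
  have hsq : (cd hA (fun x => |x|)) ^ 2 = Aᴴ * A := by
    rw [pow_two, cd_mul, hA.eq]
    conv_rhs => rw [← cd_id hA, cd_mul]
    have hfg : (fun x : ℝ => |x| * |x|) = (fun x => id x * id x) := by
      funext x
      simpa using abs_mul_abs_self x
    rw [hfg]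
  have h := hB.eq_sqrt_of_sq_eq (Matrix.posSemidef_conjTranspose_mul_self A) hsq
  have hAA := Matrix.posSemidef_conjTranspose_mul_self A
  have hS : (cd hAA.1 Real.sqrt) ^ 2 = Aᴴ * A := by
    rw [pow_two, cd_mul]
    conv_rhs => rw [← cd_id hAA.1]
    unfold cd
    congr 3
    funext i
    simp [Real.mul_self_sqrt (hAA.eigenvalues_nonneg i)]
  have h' := (cd_posSemidef hAA.1 (fun x => Real.sqrt_nonneg x)).eq_sqrt_of_sq_eq hAA hS
  rw [trNorm]
  change (cd hAA.1 Real.sqrt).trace.re = _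
  rw [h', ← h, cd_trace, Complex.ofReal_re]

lemma Mnorm_bddAbove {Mset : Set (Matrix (Fin d) (Fin d) ℂ)} (hM : IsMClass Mset)
    {Δ P N : Matrix (Fin d) (Fin d) ℂ} (hP : P.PosSemidef) (hN : N.PosSemidef)
    (hΔ : Δ = P - N) :
    BddAbove ((fun M => 2 * (M * Δ).trace.re - Δ.trace.re) '' Mset) := by
  refine ⟨2 * P.trace.re - Δ.trace.re, ?_⟩
  rintro y ⟨M, hMmem, rfl⟩
  obtain ⟨hM0, hM1⟩ := hM.2.1 M hMmem
  have e : (M * Δ).trace.re = (M * P).trace.re - (M * N).trace.re := by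
    rw [hΔ, Matrix.mul_sub, Matrix.trace_sub, Complex.sub_re]
  have h1 : 0 ≤ (M * N).trace.re := trace_mul_re_nonneg hM0 hN
  have h2 : (M * P).trace.re ≤ P.trace.re := by
    have h3 := trace_mul_re_nonneg hM1 hP
    rw [Matrix.sub_mul, Matrix.one_mul, Matrix.trace_sub, Complex.sub_re] at h3
    linarith
  simp only
  linarith

lemma Mnorm_smul {Mset : Set (Matrix (Fin d) (Fin d) ℂ)}
    (hne : Mset.Nonempty) {Δ : Matrix (Fin d) (Fin d) ℂ}
    (hb : BddAbove ((fun M => 2 * (M * Δ).trace.re - Δ.trace.re) '' Mset))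
    {c : ℝ} (hc : 0 ≤ c) :
    Mnorm Mset ((c : ℂ) • Δ) = c * Mnorm Mset Δ := by
  unfold Mnorm
  have himg : (fun M => 2 * (M * ((c:ℂ) • Δ)).trace.re - ((c:ℂ) • Δ).trace.re) '' Mset
      = (fun x => c * x) '' ((fun M => 2 * (M * Δ).trace.re - Δ.trace.re) '' Mset) := by
    rw [Set.image_image]
    apply Set.image_congr
    intro M _
    rw [Matrix.mul_smul, Matrix.trace_smul, Matrix.trace_smul]
    simp only [smul_eq_mul, Complex.mul_re, Complex.ofReal_re, Complex.ofReal_im]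
    ring
  rw [himg]
  exact (Monotone.map_csSup_of_continuousAt
    ((continuous_const.mul continuous_id).continuousAt)
    (fun a b h => mul_le_mul_of_nonneg_left h hc)
    (hne.image _) hb).symm

lemma Mnorm_neg {Mset : Set (Matrix (Fin d) (Fin d) ℂ)} (hM : IsMClass Mset)
    (Δ : Matrix (Fin d) (Fin d) ℂ) : Mnorm Mset (-Δ) = Mnorm Mset Δ := by
  unfold Mnorm
  congr 1
  apply Set.eq_of_subset_of_subset
  · rintro y ⟨M, hm, rfl⟩
    refine ⟨1 - M, hM.2.2.2 M hm, ?_⟩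
    simp only [Matrix.sub_mul, Matrix.one_mul, Matrix.mul_neg, Matrix.trace_sub,
      Matrix.trace_neg, Complex.sub_re, Complex.neg_re]
    ring
  · rintro y ⟨M, hm, rfl⟩
    refine ⟨1 - M, hM.2.2.2 M hm, ?_⟩
    simp only [Matrix.sub_mul, Matrix.one_mul, Matrix.mul_neg, Matrix.trace_sub,
      Matrix.trace_neg, Complex.sub_re, Complex.neg_re]
    ring

end Aux

/-- Theorem 2, first part: orthogonalization preserving the
distinguishability ratio, with rank control. -/
theorem orthogonalization (Mset : Set (Matrix (Fin d) (Fin d) ℂ)) (hM : IsMClass Mset)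
    (ρ σ : Matrix (Fin d) (Fin d) ℂ) (hρ : IsDensity ρ) (hσ : IsDensity σ) (hne : ρ ≠ σ) :
    ∃ ρ' σ' : Matrix (Fin d) (Fin d) ℂ, IsDensity ρ' ∧ IsDensity σ' ∧
      (ρ' * σ').trace = 0 ∧
      (ρ'.rank : ℝ) ≤ min (ρ.rank : ℝ) ((d : ℝ) / 2) ∧
      (1 / 2) * Mnorm Mset (ρ' - σ') = Mnorm Mset (ρ - σ) / trNorm (ρ - σ) := by
  classical
  have hΔherm : (ρ - σ).IsHermitian := hρ.1.1.sub hσ.1.1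
  have htr0 : (ρ - σ).trace = 0 := by rw [Matrix.trace_sub, hρ.2, hσ.2, sub_self]
  have hsum0 : ∑ i, hΔherm.eigenvalues i = 0 := by
    have h2 : (ρ - σ).trace = ((∑ i, hΔherm.eigenvalues i : ℝ) : ℂ) := by
      conv_lhs => rw [← cd_id hΔherm]
      rw [cd_trace]
      norm_num
    rw [htr0] at h2
    exact_mod_cast h2.symm
  set l : ℝ := ∑ i, max (hΔherm.eigenvalues i) 0 with hl
  have hΔne : ρ - σ ≠ 0 := sub_ne_zero.mpr hne
  have hl0 : 0 ≤ l := Finset.sum_nonneg fun i _ => le_max_right _ _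
  have hlpos : 0 < l := by
    rcases hl0.lt_or_eq with h | h
    · exact h
    · exfalso
      have hmax0 : ∀ i ∈ Finset.univ, max (hΔherm.eigenvalues i) 0 = 0 :=
        (Finset.sum_eq_zero_iff_of_nonneg (fun i _ => le_max_right _ _)).mp h.symm
      have hle : ∀ i ∈ (Finset.univ : Finset (Fin d)), hΔherm.eigenvalues i ≤ 0 := fun i hi => by
        have h4 := hmax0 i hi
        have h5 : hΔherm.eigenvalues i ≤ max (hΔherm.eigenvalues i) 0 := le_max_left _ _
        rw [h4] at h5
        exact h5
      have hez : ∀ i ∈ (Finset.univ : Finset (Fin d)), hΔherm.eigenvalues i = 0 :=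
        (Finset.sum_eq_zero_iff_of_nonpos hle).mp hsum0
      apply hΔne
      rw [← cd_id hΔherm]
      exact cd_of_forall_zero hΔherm fun i => hez i (Finset.mem_univ i)
  set P := cd hΔherm (fun x => max x 0) with hPdef
  set N := cd hΔherm (fun x => max (-x) 0) with hNdef
  have hPpsd : P.PosSemidef := cd_posSemidef _ fun x => le_max_right _ _
  have hNpsd : N.PosSemidef := cd_posSemidef _ fun x => le_max_right _ _
  have hPmN : P - N = ρ - σ := by
    rw [hPdef, hNdef, cd_sub]
    have h : (fun x : ℝ => max x 0 - max (-x) 0) = id := funext fun x => max_sub_max_neg x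
    rw [h, cd_id]
  have hNP : N * P = 0 := by
    rw [hNdef, hPdef, cd_mul]
    refine cd_of_forall_zero hΔherm fun i => ?_
    rw [mul_comm]
    exact max_mul_max_neg _
  have hNl : ∑ i, max (-(hΔherm.eigenvalues i)) 0 = l := by
    have h : ∀ i, max (-(hΔherm.eigenvalues i)) 0
        = max (hΔherm.eigenvalues i) 0 - hΔherm.eigenvalues i := fun i => by
      have := max_sub_max_neg (hΔherm.eigenvalues i)
      linarith
    rw [hl]
    simp_rw [h]
    rw [Finset.sum_sub_distrib, hsum0, sub_zero]
  set c : ℝ := l⁻¹ with hc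
  have hcpos : 0 < c := inv_pos.mpr hlpos
  set ρ₁ := cd hΔherm (fun x => c * max x 0) with hρ₁def
  set σ₁ := cd hΔherm (fun x => c * max (-x) 0) with hσ₁def
  have hρ₁d : IsDensity ρ₁ := by
    refine ⟨cd_posSemidef _ fun x => mul_nonneg hcpos.le (le_max_right _ _), ?_⟩
    rw [hρ₁def, cd_trace]
    have h : ∑ i, c * max (hΔherm.eigenvalues i) 0 = 1 := by
      rw [← Finset.mul_sum, ← hl, hc, inv_mul_cancel₀ hlpos.ne']
    rw [h]
    norm_num
  have hσ₁d : IsDensity σ₁ := by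
    refine ⟨cd_posSemidef _ fun x => mul_nonneg hcpos.le (le_max_right _ _), ?_⟩
    rw [hσ₁def, cd_trace]
    have h : ∑ i, c * max (-(hΔherm.eigenvalues i)) 0 = 1 := by
      rw [← Finset.mul_sum, hNl, hc, inv_mul_cancel₀ hlpos.ne']
    rw [h]
    norm_num
  have hprod0 : ∀ x : ℝ, (c * max x 0) * (c * max (-x) 0) = 0 := fun x => by
    have h := max_mul_max_neg x
    calc (c * max x 0) * (c * max (-x) 0) = c * c * (max x 0 * max (-x) 0) := by ring
      _ = 0 := by rw [h, mul_zero]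
  have horth : (ρ₁ * σ₁).trace = 0 := by
    rw [hρ₁def, hσ₁def, cd_mul, cd_of_forall_zero hΔherm fun i => hprod0 _, Matrix.trace_zero]
  have horth' : (σ₁ * ρ₁).trace = 0 := by
    rw [hρ₁def, hσ₁def, cd_mul]
    rw [cd_of_forall_zero hΔherm fun i => by rw [mul_comm]; exact hprod0 _, Matrix.trace_zero]
  have hdiff : ρ₁ - σ₁ = (c : ℂ) • (ρ - σ) := by
    rw [hρ₁def, hσ₁def, cd_sub]
    have h : (fun x : ℝ => c * max x 0 - c * max (-x) 0) = fun x => c * id x := by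
      funext x
      rw [← mul_sub, max_sub_max_neg]
      rfl
    rw [h, cd_smul, cd_id]
  have hbdd := Mnorm_bddAbove hM hPpsd hNpsd hPmN.symm
  have hMne : Mset.Nonempty := ⟨0, hM.1⟩
  have hsmul : Mnorm Mset ((c:ℂ) • (ρ - σ)) = c * Mnorm Mset (ρ - σ) :=
    Mnorm_smul hMne hbdd hcpos.le
  have htrn : trNorm (ρ - σ) = 2 * l := by
    rw [trNorm_eq_sum_abs hΔherm]
    simp_rw [abs_eq_max_add]
    rw [Finset.sum_add_distrib, hNl, ← hl]
    ring
  have hval : (1/2 : ℝ) * (c * Mnorm Mset (ρ - σ))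
      = Mnorm Mset (ρ - σ) / trNorm (ρ - σ) := by
    rw [htrn, hc]
    field_simp
  -- rank facts
  have hρeq : ρ = σ + P - N := by
    rw [add_sub_assoc, hPmN]
    abel
  have hPρ : P.rank ≤ ρ.rank := rank_le_of_jordan hPpsd hσ.1 hNP hρeq
  have hρ₁rank : ρ₁.rank = P.rank := by
    rw [hρ₁def, hPdef, cd_rank, cd_rank]
    exact Fintype.card_congr (Equiv.subtypeEquivRight fun i => by
      rw [Ne, Ne, mul_eq_zero]
      simp [hcpos.ne'])
  have hσ₁rank : σ₁.rank = N.rank := by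
    rw [hσ₁def, hNdef, cd_rank, cd_rank]
    exact Fintype.card_congr (Equiv.subtypeEquivRight fun i => by
      rw [Ne, Ne, mul_eq_zero]
      simp [hcpos.ne'])
  have hcard : P.rank + N.rank ≤ d := by
    rw [hPdef, hNdef, cd_rank, cd_rank]
    have hdisj : Disjoint (fun i => max (hΔherm.eigenvalues i) 0 ≠ 0)
        (fun i => max (-(hΔherm.eigenvalues i)) 0 ≠ 0) := by
      intro r hrp hrq i hri
      have h1 := hrp i hri
      have h2 := hrq i hri
      rcases mul_eq_zero.mp (max_mul_max_neg (hΔherm.eigenvalues i)) with h | h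
      exacts [h1 h, h2 h]
    rw [← Fintype.card_subtype_or_disjoint _ _ hdisj]
    simpa using Fintype.card_subtype_le _
  by_cases hhalf : 2 * P.rank ≤ d
  · refine ⟨ρ₁, σ₁, hρ₁d, hσ₁d, horth, ?_, ?_⟩
    · rw [hρ₁rank]
      apply le_min
      · exact_mod_cast hPρ
      · have h : (2 * P.rank : ℝ) ≤ d := by exact_mod_cast hhalf
        linarith
    · rw [hdiff, hsmul]
      exact hval
  · have h1 : N.rank ≤ ρ.rank := by omega
    have h2 : 2 * N.rank ≤ d := by omega
    refine ⟨σ₁, ρ₁, hσ₁d, hρ₁d, horth', ?_, ?_⟩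
    · rw [hσ₁rank]
      apply le_min
      · exact_mod_cast h1
      · have h : (2 * N.rank : ℝ) ≤ d := by exact_mod_cast h2
        linarith
    · have h : σ₁ - ρ₁ = -((c:ℂ) • (ρ - σ)) := by
        rw [← hdiff]
        abel
      rw [h, Mnorm_neg hM, hsmul]
      exact hval


end QSVQDH
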